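/- Let V ⊆ V' be a finite étale ring extension where V and V' are local normal domains, the inclusion is a local homomorphism, and V is a Henselian valuation ring. Then V' is a valuation ring. -/

import Mathlib

universe u

lemma exists_dvd_min' {V : Type u} [CommRing V] [IsDomain V] [ValuationRing V]
    {ι : Type} (s : Finset ι) (c : ι → V) (hs : s.Nonempty) :
    ∃ j ∈ s, ∀ i ∈ s, c j ∣ c i := by
  classical
  induction s using Finset.cons_induction with
  | empty => exact absurd hs (by simp)
  | cons a s ha ih =>
    rcases s.eq_empty_or_nonempty with rfl | hs'
    · exact ⟨a, by simp⟩
    · obtain ⟨j, hj, hdvd⟩ := ih hs'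
      obtain ⟨d, hd⟩ := ValuationRing.cond (c a) (c j)
      rcases hd with hd | hd
      · exact ⟨a, Finset.mem_cons_self _ _, by
          intro i hi
          rcases Finset.mem_cons.mp hi with rfl | hi
          · exact dvd_rfl
          · exact Dvd.dvd.trans ⟨d, hd.symm⟩ (hdvd i hi)⟩
      · exact ⟨j, Finset.mem_cons_of_mem hj, by
          intro i hi
          rcases Finset.mem_cons.mp hi with rfl | hi
          · exact ⟨d, hd.symm⟩
          · exact hdvd i hi⟩

lemma isIntegral_of_mem_span_two {V L : Type*} [CommRing V] [Field L] [Algebra V L]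
    (x : L) (hx : x ≠ 0) (N : ℕ) (z : L)
    (h1 : z ∈ Submodule.span V ((fun k : ℤ => x ^ k) '' Set.Icc (0:ℤ) (N:ℤ)))
    (h2 : z ∈ Submodule.span V ((fun k : ℤ => x ^ k) '' Set.Icc (-(N:ℤ)) (0:ℤ))) :
    IsIntegral V z := by
  set W : Submodule V L :=
    Submodule.span V ((fun k : ℤ => x ^ k) '' Set.Icc (-(2*N:ℤ)) (2*N:ℤ)) with hW
  have key : ∀ k : ℤ, -(2*N:ℤ) ≤ k → k ≤ (2*N:ℤ) → z * x ^ k ∈ W := by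
    intro k hk1 hk2
    by_cases hkN : k ≤ (N:ℤ)
    · refine Submodule.span_induction ?_ ?_ ?_ ?_ h1
      · rintro w ⟨i, ⟨hi0, hiN⟩, rfl⟩
        rw [← zpow_add₀ hx]
        exact Submodule.subset_span ⟨i + k, ⟨by omega, by omega⟩, rfl⟩
      · simpa using W.zero_mem
      · intro u v _ _ hu hv
        rw [add_mul]; exact W.add_mem hu hv
      · intro r u _ hu
        rw [smul_mul_assoc]; exact W.smul_mem r hu
    · refine Submodule.span_induction ?_ ?_ ?_ ?_ h2
      · rintro w ⟨i, ⟨hi0, hiN⟩, rfl⟩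
        rw [← zpow_add₀ hx]
        exact Submodule.subset_span ⟨i + k, ⟨by omega, by omega⟩, rfl⟩
      · simpa using W.zero_mem
      · intro u v _ _ hu hv
        rw [add_mul]; exact W.add_mem hu hv
      · intro r u _ hu
        rw [smul_mul_assoc]; exact W.smul_mem r hu
  have h1W : (1:L) ∈ W := Submodule.subset_span ⟨0, ⟨by omega, by omega⟩, zpow_zero x⟩
  refine isIntegral_of_smul_mem_submodule W ?_ ?_ z ?_
  · intro hbot
    rw [hbot] at h1W
    simpa using h1W
  · exact Submodule.fg_span ((Set.finite_Icc _ _).image _)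
  · intro w hw
    refine Submodule.span_induction ?_ ?_ ?_ ?_ hw
    · rintro u ⟨k, ⟨hk1, hk2⟩, rfl⟩
      simpa [smul_eq_mul] using key k hk1 hk2
    · simpa using W.zero_mem
    · intro u v _ _ hu hv
      rw [smul_add]; exact W.add_mem hu hv
    · intro r u _ hu
      rw [smul_comm]; exact W.smul_mem r hu

theorem stmt_3 {V V' : Type u} [CommRing V] [IsDomain V] [ValuationRing V]
    [HenselianLocalRing V] [CommRing V'] [IsDomain V'] [IsLocalRing V']
    [IsIntegrallyClosed V'] [Algebra V V']
    (hinj : Function.Injective (algebraMap V V'))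
    (hloc : IsLocalHom (algebraMap V V'))
    [Module.Finite V V'] [Algebra.Etale V V'] :
    ValuationRing V' := by
  classical
  let L := FractionRing V'
  have htower : algebraMap V L = (algebraMap V' L).comp (algebraMap V V') :=
    IsScalarTower.algebraMap_eq V V' L
  have hinjL : Function.Injective (algebraMap V L) := by
    rw [htower]
    exact (IsFractionRing.injective V' L).comp hinj
  haveI : NoZeroSMulDivisors V L := ⟨fun {c m} h => by
    rw [Algebra.smul_def, mul_eq_zero] at h
    exact h.imp_left (fun h => hinjL (h.trans (map_zero _).symm))⟩
  haveI : Algebra.IsIntegral V V' := Algebra.IsIntegral.of_finite V V'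
  haveI halg : Algebra.IsAlgebraic V L := by
    rw [← IsFractionRing.isAlgebraic_iff' V V' L]
    infer_instance
  set φ := algebraMap V' L with hφdef
  set ψ := algebraMap V L with hψdef
  have hφinj : Function.Injective φ := IsFractionRing.injective V' L
  refine { toPreValuationRing := ⟨fun a b => ?_⟩ }
  rcases eq_or_ne b 0 with rfl | hb0
  · exact ⟨0, Or.inl (by simp)⟩
  rcases eq_or_ne a 0 with rfl | ha0
  · exact ⟨0, Or.inr (by simp)⟩
  have hφb : φ b ≠ 0 := fun h => hb0 (hφinj (by simpa using h))
  have hφa : φ a ≠ 0 := fun h => ha0 (hφinj (by simpa using h))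
  set x : L := φ a * (φ b)⁻¹ with hxdef
  have hx : x ≠ 0 := mul_ne_zero hφa (inv_ne_zero hφb)
  have hxb : φ a = x * φ b := by
    rw [hxdef, mul_assoc, inv_mul_cancel₀ hφb, mul_one]
  obtain ⟨f, hf0, hfx⟩ := halg.isAlgebraic x
  set n := f.natDegree with hn
  obtain ⟨j, hjmem, hdvd⟩ := exists_dvd_min' (Finset.range (n+1))
    (fun i => f.coeff i) ⟨0, Finset.mem_range.mpr (Nat.succ_pos n)⟩
  have hjn : j ≤ n := Nat.lt_succ_iff.mp (Finset.mem_range.mp hjmem)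
  have hcj : f.coeff j ≠ 0 := by
    intro h
    apply hf0
    ext i
    simp only [Polynomial.coeff_zero]
    by_cases hi : i ∈ Finset.range (n+1)
    · have := hdvd i hi
      rw [h] at this
      exact zero_dvd_iff.mp this
    · exact f.coeff_eq_zero_of_natDegree_lt (by
        simp only [Finset.mem_range, not_lt] at hi; omega)
  have hchoice : ∀ i : ℕ, ∃ d : V, f.coeff i = f.coeff j * d := by
    intro i
    by_cases hi : i ∈ Finset.range (n+1)
    · exact hdvd i hi
    · refine ⟨0, by
        rw [mul_zero]
        exact f.coeff_eq_zero_of_natDegree_lt (by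
          simp only [Finset.mem_range, not_lt] at hi; omega)⟩
  choose bb hbb using hchoice
  have hbbj : bb j = 1 := by
    have h1 : f.coeff j * 1 = f.coeff j * bb j := by rw [mul_one]; exact hbb j
    exact (mul_left_cancel₀ hcj h1).symm
  -- the fundamental relation: ∑ ψ (bb i) * x^i = 0
  have hS : ∑ i ∈ Finset.range (n+1), ψ (bb i) * x ^ (i:ℤ) = 0 := by
    have key : ψ (f.coeff j) * ∑ i ∈ Finset.range (n+1), ψ (bb i) * x ^ (i:ℤ) = 0 := by
      rw [Finset.mul_sum]
      have hterm : ∀ i ∈ Finset.range (n+1),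
          ψ (f.coeff j) * (ψ (bb i) * x ^ (i:ℤ)) = f.coeff i • x ^ i := by
        intro i _
        rw [← mul_assoc, ← map_mul, ← hbb i, Algebra.smul_def, ← hψdef, zpow_natCast]
      rw [Finset.sum_congr rfl hterm, ← Polynomial.aeval_eq_sum_range, hfx]
    rcases mul_eq_zero.mp key with h | h
    · exact absurd (hinjL (by simpa using h)) hcj
    · exact h
  -- partial sums
  set Y : ℕ → L := fun r => ∑ i ∈ Finset.Ico r (n+1), ψ (bb i) * x ^ ((i:ℤ) - r) with hY
  set Y' : ℕ → L := fun r => ∑ i ∈ Finset.range (r+1), ψ (bb i) * x ^ ((i:ℤ) - r) with hY'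
  -- shifted full sum vanishes
  have hT : ∀ r : ℕ, ∑ i ∈ Finset.Ico 0 (n+1), ψ (bb i) * x ^ ((i:ℤ) - r) = 0 := by
    intro r
    have : ∀ i ∈ Finset.Ico 0 (n+1),
        ψ (bb i) * x ^ ((i:ℤ) - r) = x ^ (-(r:ℤ)) * (ψ (bb i) * x ^ (i:ℤ)) := by
      intro i _
      rw [sub_eq_neg_add, zpow_add₀ hx, ← mul_assoc, mul_comm (ψ (bb i)), mul_assoc]
    rw [Finset.sum_congr rfl this, ← Finset.mul_sum, ← Finset.range_eq_Ico, hS, mul_zero]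
  -- identity 1 : Y r + Y' r = ψ (bb r) for r ≤ n
  have I1 : ∀ r : ℕ, r ≤ n → Y r + Y' r = ψ (bb r) := by
    intro r hr
    have hsplit : Y r = ψ (bb r) + ∑ i ∈ Finset.Ico (r+1) (n+1), ψ (bb i) * x ^ ((i:ℤ) - r) := by
      simp only [hY]
      rw [Finset.sum_eq_sum_Ico_succ_bot (by omega : r < n + 1)]
      rw [sub_self, zpow_zero, mul_one]
    have hglue : ∑ i ∈ Finset.Ico 0 (r+1), ψ (bb i) * x ^ ((i:ℤ) - r)
        + ∑ i ∈ Finset.Ico (r+1) (n+1), ψ (bb i) * x ^ ((i:ℤ) - r)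
        = ∑ i ∈ Finset.Ico 0 (n+1), ψ (bb i) * x ^ ((i:ℤ) - r) :=
      Finset.sum_Ico_consecutive _ (by omega) (by omega)
    have hY'eq : Y' r = ∑ i ∈ Finset.Ico 0 (r+1), ψ (bb i) * x ^ ((i:ℤ) - r) := by
      simp only [hY']
      rw [Finset.range_eq_Ico]
    rw [hsplit, hY'eq, add_assoc, add_comm (∑ i ∈ Finset.Ico (r+1) (n+1), _), hglue, hT r,
      add_zero]
  -- identity 2 : x * Y (r+1) = - Y' r for r ≤ n
  have I2 : ∀ r : ℕ, r ≤ n → x * Y (r+1) = - Y' r := by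
    intro r hr
    have h1 : x * Y (r+1) = ∑ i ∈ Finset.Ico (r+1) (n+1), ψ (bb i) * x ^ ((i:ℤ) - r) := by
      simp only [hY]
      rw [Finset.mul_sum]
      refine Finset.sum_congr rfl fun i _ => ?_
      have he : x ^ ((i:ℤ) - (r:ℤ)) = x ^ ((i:ℤ) - ((r+1:ℕ):ℤ)) * x := by
        rw [← zpow_add_one₀ hx]
        congr 1
        push_cast
        ring
      rw [he]
      ring
    have hglue : ∑ i ∈ Finset.Ico 0 (r+1), ψ (bb i) * x ^ ((i:ℤ) - r)
        + ∑ i ∈ Finset.Ico (r+1) (n+1), ψ (bb i) * x ^ ((i:ℤ) - r)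
        = ∑ i ∈ Finset.Ico 0 (n+1), ψ (bb i) * x ^ ((i:ℤ) - r) :=
      Finset.sum_Ico_consecutive _ (by omega) (by omega)
    have hY'eq : Y' r = ∑ i ∈ Finset.Ico 0 (r+1), ψ (bb i) * x ^ ((i:ℤ) - r) := by
      simp only [hY']
      rw [Finset.range_eq_Ico]
    rw [h1, hY'eq, eq_neg_iff_add_eq_zero, add_comm]
    exact hglue.trans (hT r)
  -- integrality of the partial sums
  have hYpos : ∀ r : ℕ, Y r ∈ Submodule.span V ((fun k : ℤ => x ^ k) '' Set.Icc (0:ℤ) (n:ℤ)) := by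
    intro r
    simp only [hY]
    refine Submodule.sum_mem _ fun i hi => ?_
    rw [Finset.mem_Ico] at hi
    rw [hψdef, ← Algebra.smul_def]
    exact Submodule.smul_mem _ _ (Submodule.subset_span ⟨(i:ℤ) - r, ⟨by omega, by omega⟩, rfl⟩)
  have hY'neg : ∀ r : ℕ, r ≤ n →
      Y' r ∈ Submodule.span V ((fun k : ℤ => x ^ k) '' Set.Icc (-(n:ℤ)) (0:ℤ)) := by
    intro r hr
    simp only [hY']
    refine Submodule.sum_mem _ fun i hi => ?_
    rw [Finset.mem_range] at hi
    rw [hψdef, ← Algebra.smul_def]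
    exact Submodule.smul_mem _ _ (Submodule.subset_span ⟨(i:ℤ) - r, ⟨by omega, by omega⟩, rfl⟩)
  have hconst : ∀ (v : V) (s : Set ℤ), (0:ℤ) ∈ s →
      ψ v ∈ Submodule.span V ((fun k : ℤ => x ^ k) '' s) := by
    intro v s hs
    rw [hψdef, ← mul_one (algebraMap V L v), ← Algebra.smul_def]
    exact Submodule.smul_mem _ _ (Submodule.subset_span ⟨0, hs, zpow_zero x⟩)
  have hYint : ∀ r : ℕ, r ≤ n + 1 → IsIntegral V (Y r) := by
    intro r hr
    rcases eq_or_lt_of_le hr with rfl | hr'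
    · have : Y (n+1) = 0 := by simp only [hY]; simp
      rw [this]; exact isIntegral_zero
    · have hrn : r ≤ n := by omega
      refine isIntegral_of_mem_span_two x hx n (Y r) (hYpos r) ?_
      have : Y r = ψ (bb r) - Y' r := by rw [← I1 r hrn]; ring
      rw [this]
      exact Submodule.sub_mem _ (hconst _ _ ⟨by omega, by omega⟩) (hY'neg r hrn)
  have hY'int : ∀ r : ℕ, r ≤ n → IsIntegral V (Y' r) := by
    intro r hr
    refine isIntegral_of_mem_span_two x hx n (Y' r) ?_ (hY'neg r hr)
    have : Y' r = ψ (bb r) - Y r := by rw [← I1 r hr]; ring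
    rw [this]
    exact Submodule.sub_mem _ (hconst _ _ ⟨by omega, by omega⟩) (hYpos r)
  -- pull back integral elements to V'
  have hpull : ∀ z : L, IsIntegral V z → ∃ p : V', φ p = z := by
    intro z hz
    exact IsIntegrallyClosed.isIntegral_iff.mp (IsIntegral.tower_top (A := V') (B := L) hz)
  obtain ⟨p, hp⟩ := hpull (Y j) (hYint j (by omega))
  obtain ⟨p', hp'⟩ := hpull (Y' j) (hY'int j hjn)
  have hsum : p + p' = 1 := by
    apply hφinj
    rw [map_add, hp, hp', I1 j hjn, hbbj, map_one, map_one]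
  rcases IsLocalRing.isUnit_or_isUnit_of_add_one hsum with hu | hu
  · -- Y j is a unit in V' : x ∈ V' (b divides a)
    rcases Nat.eq_zero_or_pos j with rfl | hj0
    · exfalso
      have hY0 : Y 0 = 0 := by
        simp only [hY]
        exact hT 0
      rw [hY0] at hp
      have : p = 0 := hφinj (by rw [hp, map_zero])
      rw [this] at hu
      exact not_isUnit_zero hu
    · obtain ⟨k, rfl⟩ : ∃ k, j = k + 1 := ⟨j - 1, by omega⟩
      have hkn : k ≤ n := by omega
      obtain ⟨q, hq⟩ := hpull (Y' k) (hY'int k hkn)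
      have key : a * p = b * (-q) := by
        apply hφinj
        rw [map_mul, map_mul, map_neg, hp, hq]
        calc φ a * Y (k+1) = φ b * (x * Y (k+1)) := by rw [hxb]; ring
          _ = φ b * -Y' k := by rw [I2 k hkn]
      refine ⟨-q * ↑hu.unit⁻¹, Or.inr ?_⟩
      calc b * (-q * ↑hu.unit⁻¹) = (b * -q) * ↑hu.unit⁻¹ := by ring
        _ = (a * p) * ↑hu.unit⁻¹ := by rw [← key]
        _ = a * (p * ↑hu.unit⁻¹) := by ring
        _ = a := by rw [hu.mul_val_inv, mul_one]
  · -- Y' j is a unit in V' : x⁻¹ ∈ V' (a divides b)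
    obtain ⟨q, hq⟩ := hpull (Y (j+1)) (hYint (j+1) (by omega))
    have key : b * p' = a * (-q) := by
      apply hφinj
      rw [map_mul, map_mul, map_neg, hp', hq]
      have hYj : Y' j = -(x * Y (j+1)) := by rw [I2 j hjn, neg_neg]
      calc φ b * Y' j = φ b * -(x * Y (j+1)) := by rw [hYj]
        _ = φ a * -Y (j+1) := by rw [hxb]; ring
    refine ⟨-q * ↑hu.unit⁻¹, Or.inl ?_⟩
    calc a * (-q * ↑hu.unit⁻¹) = (a * -q) * ↑hu.unit⁻¹ := by ring
      _ = (b * p') * ↑hu.unit⁻¹ := by rw [← key]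
      _ = b * (p' * ↑hu.unit⁻¹) := by ring
      _ = b := by rw [hu.mul_val_inv, mul_one]
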